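/- Let L, H > 0, T > 0, ρ > 0, let Ξ = [0, L] × [0, H], let b : Ξ → ℝ be continuous, and let u : [0, T] × Ξ → ℝ be continuous. Let x : [0, T] × Ξ → ℝ be such that x, ∂x/∂t, and the second spatial partial derivatives of x are continuous, x satisfies ∂x/∂t(t, ξ) = −ρ x(t, ξ) + Δ_ξ x(t, ξ) + b(ξ)u(t, ξ) on [0, T] × Ξ, and x(t, ·) satisfies the Neumann boundary conditions ∂x/∂ξ₁(t, 0, ξ₂) = ∂x/∂ξ₁(t, L, ξ₂) = 0 and ∂x/∂ξ₂(t, ξ₁, 0) = ∂x/∂ξ₂(t, ξ₁, H) = 0. Then the total goodwill x̄(t) := ∫_Ξ x(t, ξ) dξ is differentiable on [0, T] and satisfies the Nerlove–Arrow equation x̄'(t) = −ρ x̄(t) + ū(t), where ū(t) := ∫_Ξ b(ξ)u(t, ξ) dξ. -/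

import Mathlib

open MeasureTheory

/-- First partial derivative in the first coordinate of `v : ℝ² → ℝ`. -/
noncomputable def pderiv1 (v : ℝ × ℝ → ℝ) (ξ : ℝ × ℝ) : ℝ :=
  fderiv ℝ v ξ (1, 0)

/-- First partial derivative in the second coordinate of `v : ℝ² → ℝ`. -/
noncomputable def pderiv2 (v : ℝ × ℝ → ℝ) (ξ : ℝ × ℝ) : ℝ :=
  fderiv ℝ v ξ (0, 1)

/-- The Laplacian `Δv = ∂²v/∂ξ₁² + ∂²v/∂ξ₂²` of `v : ℝ² → ℝ`. -/
noncomputable def laplacian2 (v : ℝ × ℝ → ℝ) (ξ : ℝ × ℝ) : ℝ :=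
  pderiv1 (pderiv1 v) ξ + pderiv2 (pderiv2 v) ξ

open Set

lemma pd_contDiffOn {v : ℝ × ℝ → ℝ} {U : Set (ℝ × ℝ)} (hU : IsOpen U)
    (hv : ContDiffOn ℝ 2 v U) (e : ℝ × ℝ) :
    ContDiffOn ℝ 1 (fun ξ => fderiv ℝ v ξ e) U :=
  (ContinuousLinearMap.apply ℝ ℝ e).contDiff.comp_contDiffOn
    (hv.fderiv_of_isOpen hU (by norm_num))

lemma pd_cont {w : ℝ × ℝ → ℝ} {U : Set (ℝ × ℝ)} (hU : IsOpen U)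
    (hw : ContDiffOn ℝ 1 w U) (e : ℝ × ℝ) :
    ContinuousOn (fun ξ => fderiv ℝ w ξ e) U :=
  (ContinuousLinearMap.apply ℝ ℝ e).continuous.comp_continuousOn
    (hw.continuousOn_fderiv_of_isOpen hU le_rfl)

lemma hasDerivAt_pd1 {v : ℝ × ℝ → ℝ} {U : Set (ℝ × ℝ)} (hU : IsOpen U)
    (hw : ContDiffOn ℝ 1 v U) {s c : ℝ} (h : (s, c) ∈ U) :
    HasDerivAt (fun r => v (r, c)) (fderiv ℝ v (s, c) (1, 0)) s := by
  have hwd : DifferentiableAt ℝ v (s, c) :=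
    (hw.differentiableOn one_ne_zero).differentiableAt (hU.mem_nhds h)
  have hγ : HasDerivAt (fun r : ℝ => ((r, c) : ℝ × ℝ)) ((1 : ℝ), (0 : ℝ)) s :=
    (hasDerivAt_id s).prodMk (hasDerivAt_const s c)
  exact hwd.hasFDerivAt.comp_hasDerivAt s hγ

lemma hasDerivAt_pd2 {v : ℝ × ℝ → ℝ} {U : Set (ℝ × ℝ)} (hU : IsOpen U)
    (hw : ContDiffOn ℝ 1 v U) {s c : ℝ} (h : (c, s) ∈ U) :
    HasDerivAt (fun r => v (c, r)) (fderiv ℝ v (c, s) (0, 1)) s := by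
  have hwd : DifferentiableAt ℝ v (c, s) :=
    (hw.differentiableOn one_ne_zero).differentiableAt (hU.mem_nhds h)
  have hγ : HasDerivAt (fun r : ℝ => ((c, r) : ℝ × ℝ)) ((0 : ℝ), (1 : ℝ)) s :=
    (hasDerivAt_const s c).prodMk (hasDerivAt_id s)
  exact hwd.hasFDerivAt.comp_hasDerivAt s hγ

lemma setIntegral_prod_symm'' (f : ℝ × ℝ → ℝ) {s t : Set ℝ}
    (hf : IntegrableOn f (s ×ˢ t)) :
    ∫ z in s ×ˢ t, f z = ∫ y in t, ∫ x in s, f (x, y) := by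
  have hf' : Integrable f ((volume.restrict s).prod (volume.restrict t)) := by
    rwa [Measure.prod_restrict, ← Measure.volume_eq_prod]
  calc ∫ z in s ×ˢ t, f z
      = ∫ z, f z ∂((volume.restrict s).prod (volume.restrict t)) := by
        rw [Measure.prod_restrict, ← Measure.volume_eq_prod]
    _ = ∫ z, f z.swap ∂((volume.restrict t).prod (volume.restrict s)) :=
        (integral_prod_swap f).symm
    _ = ∫ y in t, ∫ x in s, f (x, y) := integral_prod _ hf'.swap

lemma setIntegral_prod' (f : ℝ × ℝ → ℝ) {s t : Set ℝ}
    (hf : IntegrableOn f (s ×ˢ t)) :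
    ∫ z in s ×ˢ t, f z = ∫ x in s, ∫ y in t, f (x, y) := by
  have hf' : IntegrableOn f (s ×ˢ t) (volume.prod volume) := by
    rwa [← Measure.volume_eq_prod]
  rw [Measure.volume_eq_prod]
  exact setIntegral_prod f hf'

lemma integral_laplacian_zero {v : ℝ × ℝ → ℝ} {U : Set (ℝ × ℝ)} (hU : IsOpen U)
    {L H : ℝ} (hL : 0 ≤ L) (hH : 0 ≤ H)
    (hsub : Set.Icc ((0 : ℝ), (0 : ℝ)) (L, H) ⊆ U) (hv : ContDiffOn ℝ 2 v U)
    (hb1 : ∀ c ∈ Set.Icc (0 : ℝ) H, pderiv1 v (0, c) = 0 ∧ pderiv1 v (L, c) = 0)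
    (hb2 : ∀ c ∈ Set.Icc (0 : ℝ) L, pderiv2 v (c, 0) = 0 ∧ pderiv2 v (c, H) = 0) :
    ∫ ξ in Set.Icc ((0 : ℝ), (0 : ℝ)) (L, H), laplacian2 v ξ = 0 := by
  have hIcc : Set.Icc ((0 : ℝ), (0 : ℝ)) (L, H) = Set.Icc (0 : ℝ) L ×ˢ Set.Icc (0 : ℝ) H := by
    rw [Set.Icc_prod_eq]
  have hsub' : Set.Icc (0 : ℝ) L ×ˢ Set.Icc (0 : ℝ) H ⊆ U := by rwa [hIcc] at hsub
  have hw1 : ContDiffOn ℝ 1 (pderiv1 v) U := pd_contDiffOn hU hv (1, 0)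
  have hw2 : ContDiffOn ℝ 1 (pderiv2 v) U := pd_contDiffOn hU hv (0, 1)
  have hc1 : ContinuousOn (pderiv1 (pderiv1 v)) U := pd_cont hU hw1 (1, 0)
  have hc2 : ContinuousOn (pderiv2 (pderiv2 v)) U := pd_cont hU hw2 (0, 1)
  have hK : IsCompact (Set.Icc (0 : ℝ) L ×ˢ Set.Icc (0 : ℝ) H) :=
    isCompact_Icc.prod isCompact_Icc
  have hi1 : IntegrableOn (pderiv1 (pderiv1 v)) (Set.Icc (0 : ℝ) L ×ˢ Set.Icc (0 : ℝ) H) :=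
    (hc1.mono hsub').integrableOn_compact hK
  have hi2 : IntegrableOn (pderiv2 (pderiv2 v)) (Set.Icc (0 : ℝ) L ×ˢ Set.Icc (0 : ℝ) H) :=
    (hc2.mono hsub').integrableOn_compact hK
  have h1 : ∫ ξ in Set.Icc (0 : ℝ) L ×ˢ Set.Icc (0 : ℝ) H, pderiv1 (pderiv1 v) ξ = 0 := by
    rw [setIntegral_prod_symm'' _ hi1]
    rw [setIntegral_congr_fun measurableSet_Icc (g := fun _ => (0 : ℝ))]
    · simp
    intro c hc
    have hline : ∀ r ∈ Set.uIcc (0 : ℝ) L,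
        HasDerivAt (fun s => pderiv1 v (s, c)) (pderiv1 (pderiv1 v) (r, c)) r := by
      intro r hr
      rw [Set.uIcc_of_le hL] at hr
      exact hasDerivAt_pd1 hU hw1 (hsub' ⟨hr, hc⟩)
    have hcont : ContinuousOn (fun r => pderiv1 (pderiv1 v) (r, c)) (Set.uIcc (0 : ℝ) L) := by
      rw [Set.uIcc_of_le hL]
      exact (hc1.mono hsub').comp (Continuous.continuousOn (by fun_prop))
        (fun r hr => Set.mk_mem_prod hr hc)
    have := intervalIntegral.integral_eq_sub_of_hasDerivAt hline hcont.intervalIntegrable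
    rw [(hb1 c hc).1, (hb1 c hc).2, sub_zero] at this
    show ∫ r in Set.Icc (0 : ℝ) L, pderiv1 (pderiv1 v) (r, c) = 0
    rw [MeasureTheory.integral_Icc_eq_integral_Ioc, ← intervalIntegral.integral_of_le hL, this]
  have h2 : ∫ ξ in Set.Icc (0 : ℝ) L ×ˢ Set.Icc (0 : ℝ) H, pderiv2 (pderiv2 v) ξ = 0 := by
    rw [setIntegral_prod' _ hi2]
    rw [setIntegral_congr_fun measurableSet_Icc (g := fun _ => (0 : ℝ))]
    · simp
    intro c hc
    have hline : ∀ r ∈ Set.uIcc (0 : ℝ) H,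
        HasDerivAt (fun s => pderiv2 v (c, s)) (pderiv2 (pderiv2 v) (c, r)) r := by
      intro r hr
      rw [Set.uIcc_of_le hH] at hr
      exact hasDerivAt_pd2 hU hw2 (hsub' ⟨hc, hr⟩)
    have hcont : ContinuousOn (fun r => pderiv2 (pderiv2 v) (c, r)) (Set.uIcc (0 : ℝ) H) := by
      rw [Set.uIcc_of_le hH]
      exact (hc2.mono hsub').comp (Continuous.continuousOn (by fun_prop))
        (fun r hr => Set.mk_mem_prod hc hr)
    have := intervalIntegral.integral_eq_sub_of_hasDerivAt hline hcont.intervalIntegrable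
    rw [(hb2 c hc).1, (hb2 c hc).2, sub_zero] at this
    show ∫ r in Set.Icc (0 : ℝ) H, pderiv2 (pderiv2 v) (c, r) = 0
    rw [MeasureTheory.integral_Icc_eq_integral_Ioc, ← intervalIntegral.integral_of_le hH, this]
  rw [hIcc]
  have : ∫ ξ in Set.Icc (0 : ℝ) L ×ˢ Set.Icc (0 : ℝ) H, laplacian2 v ξ
      = (∫ ξ in Set.Icc (0 : ℝ) L ×ˢ Set.Icc (0 : ℝ) H, pderiv1 (pderiv1 v) ξ)
        + ∫ ξ in Set.Icc (0 : ℝ) L ×ˢ Set.Icc (0 : ℝ) H, pderiv2 (pderiv2 v) ξ :=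
    integral_add hi1 hi2
  rw [this, h1, h2, add_zero]

lemma swap_time (g : ℝ → (ℝ × ℝ) → ℝ) {s : Set ℝ} {t : Set (ℝ × ℝ)}
    (hf : IntegrableOn (fun p : (ℝ × ℝ) × ℝ => g p.2 p.1) (t ×ˢ s)) :
    ∫ ξ in t, ∫ r in s, g r ξ = ∫ r in s, ∫ ξ in t, g r ξ := by
  refine integral_integral_swap (f := fun ξ r => g r ξ) ?_
  rw [Function.uncurry_def, Measure.prod_restrict, ← Measure.volume_eq_prod]
  exact hf

/-- spatial averaging of the distributed goodwill dynamics
`∂x/∂t = −ρx + Δ_ξ x + b·u` on the rectangle `Ξ = [0, L] × [0, H]` with Neumann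
boundary conditions recovers the classical Nerlove–Arrow equation
`x̄'(t) = −ρ x̄(t) + ū(t)` for the total goodwill `x̄(t) = ∫_Ξ x(t, ξ) dξ`,
with `ū(t) = ∫_Ξ b(ξ) u(t, ξ) dξ`. -/
theorem stmt6 (L H T ρ : ℝ) (hL : 0 < L) (hH : 0 < H) (hT : 0 < T) (hρ : 0 < ρ)
    (b : ℝ × ℝ → ℝ) (u : ℝ → ℝ × ℝ → ℝ) (x : ℝ → ℝ × ℝ → ℝ)
    (Ξ : Set (ℝ × ℝ)) (hΞ : Ξ = Set.Icc ((0 : ℝ), (0 : ℝ)) (L, H))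
    (hb : ContinuousOn b Ξ)
    (hu : ContinuousOn (fun p : ℝ × (ℝ × ℝ) => u p.1 p.2) (Set.Icc 0 T ×ˢ Ξ))
    -- x is continuous on [0,T] × Ξ
    (hxcont : ContinuousOn (fun p : ℝ × (ℝ × ℝ) => x p.1 p.2) (Set.Icc 0 T ×ˢ Ξ))
    -- the second spatial partial derivatives of x exist near Ξ and are continuous
    (U : Set (ℝ × ℝ)) (hU : IsOpen U) (hUΞ : Ξ ⊆ U)
    (hxspace : ∀ t ∈ Set.Icc (0 : ℝ) T, ContDiffOn ℝ 2 (x t) U)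
    (hx2cont : ContinuousOn (fun p : ℝ × (ℝ × ℝ) => laplacian2 (x p.1) p.2)
      (Set.Icc 0 T ×ˢ Ξ))
    -- ∂x/∂t exists, is continuous, and satisfies the PDE on [0,T] × Ξ
    (hpde : ∀ t ∈ Set.Icc (0 : ℝ) T, ∀ ξ ∈ Ξ,
      HasDerivWithinAt (fun s => x s ξ)
        (-ρ * x t ξ + laplacian2 (x t) ξ + b ξ * u t ξ) (Set.Icc 0 T) t)
    -- Neumann boundary conditions
    (hN1 : ∀ t ∈ Set.Icc (0 : ℝ) T, ∀ ξ₂ ∈ Set.Icc (0 : ℝ) H,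
      pderiv1 (x t) (0, ξ₂) = 0 ∧ pderiv1 (x t) (L, ξ₂) = 0)
    (hN2 : ∀ t ∈ Set.Icc (0 : ℝ) T, ∀ ξ₁ ∈ Set.Icc (0 : ℝ) L,
      pderiv2 (x t) (ξ₁, 0) = 0 ∧ pderiv2 (x t) (ξ₁, H) = 0) :
    ∀ t ∈ Set.Icc (0 : ℝ) T,
      HasDerivWithinAt (fun s => ∫ ξ in Ξ, x s ξ)
        (-ρ * (∫ ξ in Ξ, x t ξ) + ∫ ξ in Ξ, b ξ * u t ξ) (Set.Icc 0 T) t := by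
  have hKc : IsCompact Ξ := by rw [hΞ]; exact isCompact_Icc
  have hKm : MeasurableSet Ξ := by rw [hΞ]; exact measurableSet_Icc
  set g : ℝ → ℝ × ℝ → ℝ := fun t ξ => -ρ * x t ξ + laplacian2 (x t) ξ + b ξ * u t ξ with hg
  -- joint continuity of g
  have hgc : ContinuousOn (fun p : ℝ × (ℝ × ℝ) => g p.1 p.2) (Set.Icc 0 T ×ˢ Ξ) := by
    refine ((continuousOn_const.mul hxcont).add hx2cont).add (ContinuousOn.mul ?_ hu)
    exact hb.comp continuous_snd.continuousOn (fun p hp => hp.2)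
  -- slices
  have hslice : ∀ t ∈ Set.Icc (0 : ℝ) T, ∀ {f : ℝ → ℝ × ℝ → ℝ},
      ContinuousOn (fun p : ℝ × (ℝ × ℝ) => f p.1 p.2) (Set.Icc 0 T ×ˢ Ξ) →
      ContinuousOn (f t) Ξ := by
    intro t ht f hf
    exact hf.comp (continuous_const.prodMk continuous_id).continuousOn
      (fun ξ hξ => ⟨ht, hξ⟩)
  have hxint : ∀ t ∈ Set.Icc (0 : ℝ) T, IntegrableOn (x t) Ξ := fun t ht =>
    (hslice t ht hxcont).integrableOn_compact hKc
  have hgint : ∀ t ∈ Set.Icc (0 : ℝ) T, IntegrableOn (g t) Ξ := fun t ht =>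
    (hslice t ht hgc).integrableOn_compact hKc
  -- the Laplacian integrates to zero
  have hlap : ∀ t ∈ Set.Icc (0 : ℝ) T, ∫ ξ in Ξ, laplacian2 (x t) ξ = 0 := by
    intro t ht
    rw [hΞ]
    exact integral_laplacian_zero hU hL.le hH.le (hΞ ▸ hUΞ) (hxspace t ht) (hN1 t ht) (hN2 t ht)
  -- value of the integral of g
  set G : ℝ → ℝ := fun r => ∫ ξ in Ξ, g r ξ with hGdef
  have hGval : ∀ t ∈ Set.Icc (0 : ℝ) T,
      G t = -ρ * (∫ ξ in Ξ, x t ξ) + ∫ ξ in Ξ, b ξ * u t ξ := by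
    intro t ht
    have i1 : IntegrableOn (fun ξ => -ρ * x t ξ) Ξ := (hxint t ht).const_mul _
    have i2 : IntegrableOn (fun ξ => laplacian2 (x t) ξ) Ξ :=
      (hslice t ht (f := fun t ξ => laplacian2 (x t) ξ) hx2cont).integrableOn_compact hKc
    have i3 : IntegrableOn (fun ξ => b ξ * u t ξ) Ξ := by
      refine ContinuousOn.integrableOn_compact hKc ?_
      exact (hb.mono (by exact fun ξ hξ => hξ)).mul (hslice t ht hu)
    have : G t = (∫ ξ in Ξ, (-ρ * x t ξ + laplacian2 (x t) ξ)) + ∫ ξ in Ξ, b ξ * u t ξ :=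
      integral_add (i1.add i2) i3
    rw [this, integral_add i1 i2, hlap t ht, add_zero, MeasureTheory.integral_const_mul]
  -- continuity of G
  have hGcont : ContinuousOn G (Set.Icc 0 T) := by
    obtain ⟨C, hC⟩ := (isCompact_Icc.prod hKc).exists_bound_of_continuousOn hgc
    refine continuousOn_of_dominated (bound := fun _ => C) ?_ ?_ ?_ ?_
    · intro r hr
      exact (hslice r hr hgc).aestronglyMeasurable hKm
    · intro r hr
      refine (ae_restrict_iff' hKm).2 (ae_of_all _ fun ξ hξ => hC (r, ξ) ⟨hr, hξ⟩)
    · exact integrableOn_const hKc.measure_lt_top.ne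
    · refine (ae_restrict_iff' hKm).2 (ae_of_all _ fun ξ hξ => ?_)
      exact hgc.comp (continuous_id.prodMk continuous_const).continuousOn
        (fun r hr => ⟨hr, hξ⟩)
  -- FTC in time, pointwise in ξ
  have hftc : ∀ s ∈ Set.Icc (0 : ℝ) T, ∀ ξ ∈ Ξ,
      x s ξ - x 0 ξ = ∫ r in (0 : ℝ)..s, g r ξ := by
    intro s hs ξ hξ
    symm
    have hxc : ContinuousOn (fun r => x r ξ) (Set.Icc 0 s) := by
      refine (hxcont.comp (continuous_id.prodMk continuous_const).continuousOn
        (fun r hr => ⟨⟨hr.1, hr.2.trans hs.2⟩, hξ⟩))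
    refine intervalIntegral.integral_eq_sub_of_hasDeriv_right_of_le hs.1 hxc ?_ ?_
    · intro r hr
      have hrT : r ∈ Set.Icc (0 : ℝ) T := ⟨hr.1.le, (hr.2.le.trans hs.2)⟩
      refine (hpde r hrT ξ hξ).mono_of_mem_nhdsWithin ?_
      exact Icc_mem_nhdsGT_of_mem ⟨hr.1.le, hr.2.trans_le hs.2⟩
    · rw [intervalIntegrable_iff_integrableOn_Icc_of_le hs.1]
      refine ContinuousOn.integrableOn_compact isCompact_Icc ?_
      exact hgc.comp (continuous_id.prodMk continuous_const).continuousOn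
        (fun r (hr : r ∈ Set.Icc (0:ℝ) s) => ⟨⟨hr.1, hr.2.trans hs.2⟩, hξ⟩)
  -- hence the averaged identity
  have hFeq : ∀ s ∈ Set.Icc (0 : ℝ) T,
      (∫ ξ in Ξ, x s ξ) = (∫ ξ in Ξ, x 0 ξ) + ∫ r in (0 : ℝ)..s, G r := by
    intro s hs
    have h0 : (0 : ℝ) ∈ Set.Icc (0 : ℝ) T := ⟨le_rfl, hT.le⟩
    have hswapint : IntegrableOn (fun p : (ℝ × ℝ) × ℝ => g p.2 p.1) (Ξ ×ˢ Set.Icc 0 s) := by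
      refine ContinuousOn.integrableOn_compact (hKc.prod isCompact_Icc) ?_
      exact hgc.comp (continuous_snd.prodMk continuous_fst).continuousOn
        (fun p (hp : p ∈ Ξ ×ˢ Set.Icc (0:ℝ) s) => ⟨⟨hp.2.1, hp.2.2.trans hs.2⟩, hp.1⟩)
    have key : ∫ ξ in Ξ, (x s ξ - x 0 ξ) = ∫ r in Set.Icc (0 : ℝ) s, G r := by
      rw [setIntegral_congr_fun hKm (g := fun ξ => ∫ r in Set.Icc (0 : ℝ) s, g r ξ)]
      · exact swap_time g hswapint
      · intro ξ hξ
        show x s ξ - x 0 ξ = ∫ r in Set.Icc (0 : ℝ) s, g r ξ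
        rw [hftc s hs ξ hξ, intervalIntegral.integral_of_le hs.1,
          MeasureTheory.integral_Icc_eq_integral_Ioc]
    rw [MeasureTheory.integral_sub (hxint s hs) (hxint 0 h0)] at key
    rw [intervalIntegral.integral_of_le hs.1, ← MeasureTheory.integral_Icc_eq_integral_Ioc]
    linarith [key]
  -- conclusion
  intro t ht
  haveI : Fact (t ∈ Set.Icc (0 : ℝ) T) := ⟨ht⟩
  have hint : IntervalIntegrable G volume 0 t := by
    refine ContinuousOn.intervalIntegrable ?_
    rw [Set.uIcc_of_le ht.1]
    exact hGcont.mono (Set.Icc_subset_Icc le_rfl ht.2)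
  have hmeas : StronglyMeasurableAtFilter G (nhdsWithin t (Set.Icc (0 : ℝ) T)) :=
    ⟨Set.Icc 0 T, self_mem_nhdsWithin, hGcont.aestronglyMeasurable measurableSet_Icc⟩
  have hd : HasDerivWithinAt (fun s => (∫ ξ in Ξ, x 0 ξ) + ∫ r in (0 : ℝ)..s, G r)
      (G t) (Set.Icc 0 T) t :=
    (intervalIntegral.integral_hasDerivWithinAt_right hint hmeas (hGcont t ht)).const_add _
  have := hd.congr (fun s hs => (hFeq s hs)) (hFeq t ht)
  rwa [hGval t ht] at this
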